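/- Let n ≥ 1 and let g : ℝⁿ → ℝ be a polynomial function. Then for every ℏ > 0 and every y ∈ ℝⁿ, ∫_{ℝⁿ} g(x) · exp((−‖x‖²/2 + ⟨x, y⟩)/ℏ) dx = (2πℏ)^{n/2} · exp(‖y‖²/(2ℏ)) · Σ_{i=0}^{∞} (ℏ/2)^i (Δ^i g)(y) / i!, where the sum has only finitely many nonzero terms (since Δ^i g = 0 for i large). -/

import Mathlib

open MeasureTheory Real

/-- The Laplacian of a multivariate polynomial: `Δ p = ∑ j ∂²p/∂x_j²`. -/
noncomputable def mvLaplacian {n : ℕ} (p : MvPolynomial (Fin n) ℝ) :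
    MvPolynomial (Fin n) ℝ :=
  ∑ j : Fin n, MvPolynomial.pderiv j (MvPolynomial.pderiv j p)

namespace GaussAux
open MvPolynomial
variable {n : ℕ}

lemma pderiv_comm (i j : Fin n) (p : MvPolynomial (Fin n) ℝ) :
    pderiv i (pderiv j p) = pderiv j (pderiv i p) := by
  induction p using MvPolynomial.induction_on' with
  | monomial s a =>
    rcases eq_or_ne i j with rfl | hij
    · rfl
    · simp only [pderiv_monomial]
      have h1 : s - Finsupp.single j 1 - Finsupp.single i 1
          = s - Finsupp.single i 1 - Finsupp.single j 1 := by
        ext k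
        simp only [Finsupp.coe_tsub, Pi.sub_apply]
        omega
      have h2 : (s - Finsupp.single j 1 : Fin n →₀ ℕ) i = s i := by
        rw [Finsupp.tsub_apply, Finsupp.single_eq_of_ne hij, Nat.sub_zero]
      have h3 : (s - Finsupp.single i 1 : Fin n →₀ ℕ) j = s j := by
        rw [Finsupp.tsub_apply, Finsupp.single_eq_of_ne (fun h => hij h.symm), Nat.sub_zero]
      rw [h1, h2, h3]
      ring_nf
  | add p q hp hq => simp [map_add, hp, hq]

lemma lap_add (p q : MvPolynomial (Fin n) ℝ) :
    mvLaplacian (p + q) = mvLaplacian p + mvLaplacian q := by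
  simp [mvLaplacian, map_add, Finset.sum_add_distrib]

lemma lap_zero : mvLaplacian (0 : MvPolynomial (Fin n) ℝ) = 0 := by
  simp [mvLaplacian]

lemma lap_C_mul (c : ℝ) (p : MvPolynomial (Fin n) ℝ) :
    mvLaplacian (C c * p) = C c * mvLaplacian p := by
  simp [mvLaplacian, pderiv_C_mul, Finset.mul_sum]

lemma lap_iter_add (i : ℕ) (p q : MvPolynomial (Fin n) ℝ) :
    mvLaplacian^[i] (p + q) = mvLaplacian^[i] p + mvLaplacian^[i] q := by
  induction i generalizing p q with
  | zero => rfl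
  | succ i ih => simp [Function.iterate_succ_apply, lap_add, ih]

lemma lap_iter_zero (i : ℕ) : mvLaplacian^[i] (0 : MvPolynomial (Fin n) ℝ) = 0 := by
  induction i with
  | zero => rfl
  | succ i ih => simp [Function.iterate_succ_apply, lap_zero, ih]

lemma lap_iter_C_mul (i : ℕ) (c : ℝ) (p : MvPolynomial (Fin n) ℝ) :
    mvLaplacian^[i] (C c * p) = C c * mvLaplacian^[i] p := by
  induction i generalizing p with
  | zero => rfl
  | succ i ih => simp [Function.iterate_succ_apply, lap_C_mul, ih]

lemma pderiv_lap (j : Fin n) (p : MvPolynomial (Fin n) ℝ) :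
    pderiv j (mvLaplacian p) = mvLaplacian (pderiv j p) := by
  simp only [mvLaplacian, map_sum]
  exact Finset.sum_congr rfl fun k _ => by
    rw [pderiv_comm j k, pderiv_comm j k]

lemma pderiv_lap_iter (i : ℕ) (j : Fin n) (p : MvPolynomial (Fin n) ℝ) :
    pderiv j (mvLaplacian^[i] p) = mvLaplacian^[i] (pderiv j p) := by
  induction i generalizing p with
  | zero => rfl
  | succ i ih => simp [Function.iterate_succ_apply, pderiv_lap, ih]

lemma totalDegree_pderiv_le (i : Fin n) (p : MvPolynomial (Fin n) ℝ) (d : ℕ)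
    (h : p.totalDegree ≤ d + 1) : (pderiv i p).totalDegree ≤ d := by
  conv_lhs => rw [p.as_sum]
  rw [map_sum]
  refine le_trans (totalDegree_finset_sum _ _) (Finset.sup_le fun v hv => ?_)
  rw [pderiv_monomial]
  rcases eq_or_ne ((coeff v p) * (v i : ℝ)) 0 with h0 | h0
  · simp [h0]
  · have hvi : 1 ≤ v i := by
      rcases Nat.eq_zero_or_pos (v i) with h' | h'
      · simp [h'] at h0
      · exact h'
    rw [totalDegree_monomial _ h0]
    have hsum : (v - Finsupp.single i 1).sum (fun _ e => e) + 1 = v.sum (fun _ e => e) := by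
      have : (v - Finsupp.single i 1) + Finsupp.single i 1 = v := by
        ext k
        simp [Finsupp.tsub_apply, Finsupp.single_apply]
        rcases eq_or_ne i k with rfl | hik
        · simp; omega
        · simp [hik]
      conv_rhs => rw [← this]
      rw [Finsupp.sum_add_index' (fun _ => rfl) (fun _ _ _ => rfl)]
      simp [Finsupp.sum_single_index]
    have hvle : v.sum (fun _ e => e) ≤ d + 1 := le_trans (le_totalDegree hv) h
    omega

lemma pderiv_of_deg_zero (i : Fin n) (p : MvPolynomial (Fin n) ℝ)
    (h : p.totalDegree = 0) : pderiv i p = 0 := by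
  conv_lhs => rw [p.as_sum]
  rw [map_sum]
  refine Finset.sum_eq_zero fun v hv => ?_
  have := (totalDegree_eq_zero_iff _ p).mp h v hv i
  simp [pderiv_monomial, this]

lemma lap_totalDegree_le (p : MvPolynomial (Fin n) ℝ) (d : ℕ)
    (h : p.totalDegree ≤ d + 1) : (mvLaplacian p).totalDegree ≤ d := by
  refine le_trans (totalDegree_finset_sum _ _) (Finset.sup_le fun j _ => ?_)
  exact totalDegree_pderiv_le _ _ _
    (le_trans (totalDegree_pderiv_le _ _ _ h) (Nat.le_succ d))

lemma lap_iter_vanish : ∀ (k : ℕ) (p : MvPolynomial (Fin n) ℝ),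
    p.totalDegree ≤ k → mvLaplacian^[k + 1] p = 0 := by
  intro k
  induction k with
  | zero =>
    intro p hp
    simp only [zero_add, Function.iterate_one, mvLaplacian]
    refine Finset.sum_eq_zero fun j _ => ?_
    rw [pderiv_of_deg_zero j p (Nat.le_zero.mp hp), map_zero]
  | succ k ih =>
    intro p hp
    rw [Function.iterate_succ_apply]
    exact ih _ (lap_totalDegree_le p k hp)

lemma lap_iter_eq_zero {p : MvPolynomial (Fin n) ℝ} {i : ℕ}
    (h : p.totalDegree < i) : mvLaplacian^[i] p = 0 := by
  obtain ⟨m, rfl⟩ : ∃ m, i = m + (p.totalDegree + 1) :=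
    ⟨i - (p.totalDegree + 1), by omega⟩
  rw [Function.iterate_add_apply, lap_iter_vanish _ p le_rfl, lap_iter_zero]

lemma lap_X_mul (j : Fin n) (q : MvPolynomial (Fin n) ℝ) :
    mvLaplacian (X j * q) = X j * mvLaplacian q + C 2 * pderiv j q := by
  simp only [mvLaplacian, pderiv_mul]
  have key : ∀ k : Fin n, pderiv k (pderiv k (X j) * q + X j * pderiv k q)
      = X j * pderiv k (pderiv k q)
        + (if k = j then (2 : MvPolynomial (Fin n) ℝ) * pderiv j q else 0) := by
    intro k
    rcases eq_or_ne k j with rfl | hkj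
    · simp [pderiv_X_self, pderiv_mul]
      ring
    · rw [pderiv_X_of_ne (Ne.symm hkj), zero_mul, zero_add, pderiv_mul,
        pderiv_X_of_ne (Ne.symm hkj), zero_mul, zero_add, if_neg hkj, add_zero]
  calc ∑ k : Fin n, pderiv k (pderiv k (X j) * q + X j * pderiv k q)
      = ∑ k : Fin n, (X j * pderiv k (pderiv k q)
          + if k = j then (2:MvPolynomial (Fin n) ℝ) * pderiv j q else 0) :=
        Finset.sum_congr rfl fun k _ => key k
    _ = X j * ∑ k : Fin n, pderiv k (pderiv k q) + 2 * pderiv j q := by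
        rw [Finset.sum_add_distrib, Finset.sum_ite_eq' Finset.univ j
          (fun _ => (2:MvPolynomial (Fin n) ℝ) * pderiv j q), if_pos (Finset.mem_univ j),
          Finset.mul_sum]
    _ = X j * ∑ k : Fin n, pderiv k (pderiv k q) + C 2 * pderiv j q := by
        rw [show ((C 2 : MvPolynomial (Fin n) ℝ)) = 2 from map_ofNat _ 2]

end GaussAux

namespace GaussAux
open MvPolynomial
variable {n : ℕ}

lemma lap_iter_X_mul (j : Fin n) :
    ∀ (i : ℕ) (q : MvPolynomial (Fin n) ℝ), mvLaplacian^[i + 1] (X j * q)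
      = X j * mvLaplacian^[i + 1] q
        + C (2 * (i + 1) : ℝ) * mvLaplacian^[i] (pderiv j q) := by
  intro i
  induction i with
  | zero =>
    intro q
    simp only [zero_add, Function.iterate_one, Function.iterate_zero, id_eq]
    rw [lap_X_mul]
    norm_num
  | succ i ih =>
    intro q
    rw [Function.iterate_succ_apply, lap_X_mul, lap_iter_add, lap_iter_C_mul, ih (mvLaplacian q),
      pderiv_lap, ← Function.iterate_succ_apply, ← Function.iterate_succ_apply]
    have : (C (2 * (i + 1) : ℝ) : MvPolynomial (Fin n) ℝ) + C 2 = C (2 * (i + 1 + 1) : ℝ) := by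
      rw [← map_add]; norm_num; ring_nf
    push_cast
    push_cast at this
    rw [add_assoc, ← add_mul, this]

/-- The heat-semigroup sum `∑ (t/2)^i (Δ^i p)(z) / i!`. -/
noncomputable def Sf (t : ℝ) (z : Fin n → ℝ) (p : MvPolynomial (Fin n) ℝ) : ℝ :=
  ∑' i : ℕ, (t / 2) ^ i * (eval z (mvLaplacian^[i] p)) / (i.factorial)

lemma Sf_eq_sum (t : ℝ) (z : Fin n → ℝ) (p : MvPolynomial (Fin n) ℝ) {N : ℕ}
    (h : p.totalDegree < N) :
    Sf t z p = ∑ i ∈ Finset.range N, (t / 2) ^ i * (eval z (mvLaplacian^[i] p)) / (i.factorial) := by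
  refine tsum_eq_sum fun i hi => ?_
  rw [lap_iter_eq_zero (lt_of_lt_of_le h (by simpa using Finset.mem_range.not.mp hi))]
  simp

lemma Sf_zero (t : ℝ) (z : Fin n → ℝ) : Sf t z (0 : MvPolynomial (Fin n) ℝ) = 0 := by
  rw [Sf_eq_sum t z 0 (N := 1) (by simp)]
  simp [lap_iter_zero]

lemma Sf_add (t : ℝ) (z : Fin n → ℝ) (p q : MvPolynomial (Fin n) ℝ) :
    Sf t z (p + q) = Sf t z p + Sf t z q := by
  set N := max (p.totalDegree) (q.totalDegree) + 1 with hN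
  have hp : p.totalDegree < N := by omega
  have hq : q.totalDegree < N := by omega
  have hpq : (p + q).totalDegree < N :=
    lt_of_le_of_lt (totalDegree_add p q) (by simp only [hN, sup_lt_iff]; omega)
  rw [Sf_eq_sum t z _ hpq, Sf_eq_sum t z _ hp, Sf_eq_sum t z _ hq, ← Finset.sum_add_distrib]
  refine Finset.sum_congr rfl fun i _ => ?_
  rw [lap_iter_add, map_add]
  ring

lemma Sf_C_mul (t : ℝ) (z : Fin n → ℝ) (c : ℝ) (p : MvPolynomial (Fin n) ℝ) :
    Sf t z (C c * p) = c * Sf t z p := by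
  rcases eq_or_ne c 0 with rfl | hc
  · simp [Sf_zero]
  have hdeg : (C c * p).totalDegree < p.totalDegree + 1 := by
    have := totalDegree_mul (C c : MvPolynomial (Fin n) ℝ) p
    simp [totalDegree_C] at this
    omega
  rw [Sf_eq_sum t z _ hdeg, Sf_eq_sum t z p (N := p.totalDegree + 1) (by omega),
    Finset.mul_sum]
  refine Finset.sum_congr rfl fun i _ => ?_
  rw [lap_iter_C_mul, map_mul, eval_C]
  ring

lemma Sf_sum (t : ℝ) (z : Fin n → ℝ) {ι : Type*} [DecidableEq ι] (s : Finset ι)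
    (f : ι → MvPolynomial (Fin n) ℝ) :
    Sf t z (∑ i ∈ s, f i) = ∑ i ∈ s, Sf t z (f i) := by
  induction s using Finset.induction with
  | empty => simp [Sf_zero]
  | insert a s' hne ih => rw [Finset.sum_insert hne, Sf_add, ih, Finset.sum_insert hne]

lemma Sf_C (t : ℝ) (z : Fin n → ℝ) (c : ℝ) : Sf t z (C c : MvPolynomial (Fin n) ℝ) = c := by
  rw [Sf_eq_sum t z _ (N := 1) (by simp [totalDegree_C])]
  simp

lemma eval_zero_X_mul (j : Fin n) (r : MvPolynomial (Fin n) ℝ) :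
    eval (0 : Fin n → ℝ) (X j * r) = 0 := by simp

lemma Sf_X_mul (t : ℝ) (j : Fin n) (q : MvPolynomial (Fin n) ℝ) :
    Sf t 0 (X j * q) = t * Sf t 0 (pderiv j q) := by
  set N := q.totalDegree + 1 with hN
  have hdeg1 : (X j * q).totalDegree < N + 1 := by
    have := totalDegree_mul (X j : MvPolynomial (Fin n) ℝ) q
    have hx := totalDegree_X (R := ℝ) j
    omega
  have hdeg2 : (pderiv j q).totalDegree < N := by
    rcases Nat.eq_zero_or_pos q.totalDegree with h0 | h0
    · rw [pderiv_of_deg_zero j q h0]; simp [hN]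
    · have := totalDegree_pderiv_le j q (q.totalDegree - 1) (by omega)
      omega
  rw [Sf_eq_sum t _ _ hdeg1, Sf_eq_sum t _ _ hdeg2, Finset.sum_range_succ',
    Finset.mul_sum]
  have h0 : (t / 2) ^ 0 * (eval 0 (mvLaplacian^[0] (X j * q))) / ((0:ℕ).factorial) = 0 := by
    simp
  rw [h0, add_zero]
  refine Finset.sum_congr rfl fun i _ => ?_
  rw [lap_iter_X_mul j i q, map_add, map_mul, eval_X]
  simp only [Pi.zero_apply, zero_mul, zero_add, map_mul, eval_C, pderiv_lap_iter]
  rw [Nat.factorial_succ]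
  push_cast
  have hfac : ((i.factorial : ℝ)) ≠ 0 := by positivity
  field_simp
  ring

/-- One-dimensional Gaussian moment. -/
noncomputable def M (t : ℝ) (k : ℕ) : ℝ := ∫ x : ℝ, x ^ k * Real.exp (-((2 * t)⁻¹) * x ^ 2)

variable {t : ℝ}

lemma integrable_M (ht : 0 < t) (k : ℕ) :
    Integrable (fun x : ℝ => x ^ k * Real.exp (-((2 * t)⁻¹) * x ^ 2)) := by
  have hb : 0 < (2 * t)⁻¹ := by positivity
  simpa [Real.rpow_natCast] using integrable_rpow_mul_exp_neg_mul_sq hb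
    (s := (k : ℝ)) ((by norm_num : (-1:ℝ) < 0).trans_le (Nat.cast_nonneg k))

lemma tendsto_pow_gauss (ht : 0 < t) (m : ℕ) :
    Filter.Tendsto (fun x : ℝ => x ^ m * Real.exp (-((2 * t)⁻¹) * x ^ 2))
      (Filter.cocompact ℝ) (nhds 0) := by
  have hb : 0 < (2 * t)⁻¹ := by positivity
  have h := tendsto_rpow_abs_mul_exp_neg_mul_sq_cocompact hb (m : ℝ)
  rw [tendsto_zero_iff_norm_tendsto_zero]
  refine h.congr fun x => ?_
  rw [Real.rpow_natCast, norm_mul, Real.norm_eq_abs, Real.norm_eq_abs, abs_pow,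
    Real.abs_exp]

lemma atBot_le_cocompact : (Filter.atBot : Filter ℝ) ≤ Filter.cocompact ℝ := by
  rw [cocompact_eq_atBot_atTop]; exact le_sup_left

lemma atTop_le_cocompact : (Filter.atTop : Filter ℝ) ≤ Filter.cocompact ℝ := by
  rw [cocompact_eq_atBot_atTop]; exact le_sup_right

lemma M_rec (ht : 0 < t) (k : ℕ) : M t (k + 2) = t * (k + 1) * M t k := by
  have hb : 0 < (2 * t)⁻¹ := by positivity
  set F : ℝ → ℝ := fun x => x ^ (k + 1) * Real.exp (-((2 * t)⁻¹) * x ^ 2) with hF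
  set F' : ℝ → ℝ := fun x =>
    ((k : ℝ) + 1) * (x ^ k * Real.exp (-((2 * t)⁻¹) * x ^ 2))
      - (2 * (2 * t)⁻¹) * (x ^ (k + 2) * Real.exp (-((2 * t)⁻¹) * x ^ 2)) with hF'
  have hderiv : ∀ x : ℝ, HasDerivAt F (F' x) x := by
    intro x
    have h1 : HasDerivAt (fun x : ℝ => x ^ (k + 1)) (((k : ℝ) + 1) * x ^ k) x := by
      simpa using hasDerivAt_pow (k + 1) x
    have h2 : HasDerivAt (fun x : ℝ => Real.exp (-((2 * t)⁻¹) * x ^ 2))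
        (Real.exp (-((2 * t)⁻¹) * x ^ 2) * (-((2 * t)⁻¹) * (2 * x))) x := by
      exact (((hasDerivAt_pow 2 x).const_mul (-((2 * t)⁻¹))).congr_deriv (by ring)).exp
    exact (h1.mul h2).congr_deriv (by simp only [hF']; ring)
  have hint : Integrable F' :=
    ((integrable_M ht k).const_mul _).sub ((integrable_M ht (k + 2)).const_mul _)
  have h0 := MeasureTheory.integral_of_hasDerivAt_of_tendsto hderiv hint
    ((tendsto_pow_gauss ht (k + 1)).mono_left atBot_le_cocompact)
    ((tendsto_pow_gauss ht (k + 1)).mono_left atTop_le_cocompact)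
  rw [sub_zero] at h0
  have hsplit : ∫ x : ℝ, F' x
      = ((k : ℝ) + 1) * M t k - (2 * (2 * t)⁻¹) * M t (k + 2) := by
    rw [hF', MeasureTheory.integral_sub ((integrable_M ht k).const_mul _)
      ((integrable_M ht (k + 2)).const_mul _), MeasureTheory.integral_const_mul,
      MeasureTheory.integral_const_mul]
    rfl
  rw [h0] at hsplit
  have ht' : (t : ℝ) ≠ 0 := ne_of_gt ht
  have h2b : (2 * (2 * t)⁻¹) = t⁻¹ := by field_simp
  rw [h2b] at hsplit
  have : t⁻¹ * M t (k + 2) = ((k : ℝ) + 1) * M t k := by linarith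
  have := congrArg (fun z => t * z) this
  simpa [mul_assoc, inv_mul_cancel_left₀ ht', mul_left_comm, ht'] using this

lemma M_one (ht : 0 < t) : M t 1 = 0 := by
  have hb : 0 < (2 * t)⁻¹ := by positivity
  set c : ℝ := -(2 * (2 * t)⁻¹)⁻¹ with hc
  set F : ℝ → ℝ := fun x => c * Real.exp (-((2 * t)⁻¹) * x ^ 2) with hF
  have hderiv : ∀ x : ℝ, HasDerivAt F (x ^ 1 * Real.exp (-((2 * t)⁻¹) * x ^ 2)) x := by
    intro x
    have h2 : HasDerivAt (fun x : ℝ => Real.exp (-((2 * t)⁻¹) * x ^ 2))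
        (Real.exp (-((2 * t)⁻¹) * x ^ 2) * (-((2 * t)⁻¹) * (2 * x))) x := by
      exact (((hasDerivAt_pow 2 x).const_mul (-((2 * t)⁻¹))).congr_deriv (by ring)).exp
    refine (h2.const_mul c).congr_deriv ?_
    have hb' : ((2 * t)⁻¹ : ℝ) ≠ 0 := ne_of_gt hb
    rw [hc]
    field_simp
  have htend : Filter.Tendsto F (Filter.cocompact ℝ) (nhds 0) := by
    have h := (tendsto_pow_gauss ht 0).const_mul c
    rw [mul_zero] at h
    exact h.congr fun x => by simp [hF]
  have h0 := MeasureTheory.integral_of_hasDerivAt_of_tendsto hderiv (integrable_M ht 1)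
    (htend.mono_left atBot_le_cocompact) (htend.mono_left atTop_le_cocompact)
  rw [sub_zero] at h0
  exact h0

lemma M_zero (ht : 0 < t) : M t 0 = Real.sqrt (2 * π * t) := by
  have hb : 0 < (2 * t)⁻¹ := by positivity
  have := integral_gaussian ((2 * t)⁻¹)
  rw [M]
  simp only [pow_zero, one_mul]
  rw [this]
  congr 1
  field_simp

lemma finsupp_decomp {j : Fin n} {α : Fin n →₀ ℕ} (h : α j ≠ 0) :
    Finsupp.single j 1 + (α - Finsupp.single j 1) = α := by
  ext k
  simp only [Finsupp.add_apply, Finsupp.coe_tsub, Pi.sub_apply, Finsupp.single_apply]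
  split_ifs with hjk
  · subst hjk; omega
  · omega

lemma degree_sum_decomp (j : Fin n) (β : Fin n →₀ ℕ) :
    (Finsupp.single j 1 + β).sum (fun _ e => e) = 1 + β.sum (fun _ e => e) := by
  rw [Finsupp.sum_add_index' (fun _ => rfl) (fun _ _ _ => rfl),
    Finsupp.sum_single_index rfl]

lemma core (ht : 0 < t) : ∀ (d : ℕ) (α : Fin n →₀ ℕ), α.sum (fun _ e => e) ≤ d →
    (∏ j : Fin n, M t (α j))
      = (Real.sqrt (2 * π * t)) ^ n * Sf t 0 (monomial α (1 : ℝ)) := by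
  intro d
  induction d using Nat.strong_induction_on with
  | _ d IH =>
    intro α hα
    rcases eq_or_ne α 0 with rfl | hα0
    · have : (monomial (0 : Fin n →₀ ℕ) (1:ℝ)) = C 1 := by simp
      rw [this, Sf_C]
      simp [M_zero ht]
    · obtain ⟨j, hj⟩ : ∃ j, α j ≠ 0 := by
        by_contra hcon
        push_neg at hcon
        exact hα0 (Finsupp.ext fun k => hcon k)
      set β := α - Finsupp.single j 1 with hβ
      have hdecomp : Finsupp.single j 1 + β = α := finsupp_decomp hj
      have hβj : β j = α j - 1 := by
        simp [hβ, Finsupp.coe_tsub, Finsupp.single_apply]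
      have hmono : (monomial α (1:ℝ)) = X j * monomial β 1 := by
        rw [← hdecomp, monomial_single_add, pow_one]
      have hSf : Sf t 0 (monomial α (1:ℝ))
          = t * Sf t 0 (monomial (β - Finsupp.single j 1) ((β j : ℝ))) := by
        rw [hmono, Sf_X_mul, pderiv_monomial, one_mul]
      rcases Nat.eq_zero_or_pos (β j) with hb0 | hb1
      · -- α j = 1, both sides vanish
        have hαj1 : α j = 1 := by omega
        have hL : (∏ k : Fin n, M t (α k)) = 0 :=
          Finset.prod_eq_zero (Finset.mem_univ j) (by rw [hαj1, M_one ht])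
        rw [hL, hSf, hb0]
        push_cast
        rw [monomial_zero, Sf_zero]
        ring
      · -- β j ≥ 1
        set γ := β - Finsupp.single j 1 with hγ
        have hdecompβ : Finsupp.single j 1 + γ = β :=
          finsupp_decomp (by omega)
        have hγj : γ j = β j - 1 := by
          simp [hγ, Finsupp.coe_tsub, Finsupp.single_apply]
        have hγk : ∀ k, k ≠ j → γ k = α k := by
          intro k hk
          have hjk : ¬ j = k := fun h => hk h.symm
          simp [hγ, hβ, Finsupp.coe_tsub, Finsupp.single_apply, hjk]
        have hsums : α.sum (fun _ e => e) = 2 + γ.sum (fun _ e => e) := by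
          rw [← hdecomp, degree_sum_decomp, ← hdecompβ, degree_sum_decomp]
          omega
        have hαd : 1 ≤ α.sum (fun _ e => e) := by omega
        have hd1 : 1 ≤ d := le_trans hαd hα
        have hγd : γ.sum (fun _ e => e) ≤ d - 1 := by omega
        have hIH := IH (d - 1) (by omega) γ hγd
        -- rewrite coefficient
        have hcoeff : (monomial γ ((β j : ℝ))) = C ((β j : ℝ)) * monomial γ 1 := by
          rw [C_mul_monomial, mul_one]
        have hSf2 : Sf t 0 (monomial α (1:ℝ))
            = t * ((β j : ℝ) * Sf t 0 (monomial γ 1)) := by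
          rw [hSf, hcoeff, Sf_C_mul]
        -- products
        have hαj : α j = β j + 1 := by omega
        have hprod : (∏ k : Fin n, M t (α k))
            = t * (β j : ℝ) * (∏ k : Fin n, M t (γ k)) := by
          rw [← Finset.mul_prod_erase Finset.univ (fun k => M t (α k)) (Finset.mem_univ j),
            ← Finset.mul_prod_erase Finset.univ (fun k => M t (γ k)) (Finset.mem_univ j)]
          have h1 : M t (α j) = t * (β j : ℝ) * M t (γ j) := by
            have : α j = (γ j) + 2 := by omega
            rw [this, M_rec ht]
            have hnat : γ j + 1 = β j := by omega
            have : ((γ j : ℝ) + 1) = (β j : ℝ) := by exact_mod_cast hnat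
            rw [this]
          have h2 : (∏ k ∈ Finset.univ.erase j, M t (α k))
              = ∏ k ∈ Finset.univ.erase j, M t (γ k) :=
            Finset.prod_congr rfl fun k hk =>
              by rw [hγk k (Finset.ne_of_mem_erase hk)]
          rw [h1, h2]
          ring
        rw [hprod, hIH, hSf2]
        ring

lemma integrand_monomial_eq (t : ℝ) (α : Fin n →₀ ℕ) (c : ℝ) (v : Fin n → ℝ) :
    eval v (monomial α c) * Real.exp (-(∑ j, v j ^ 2) / (2 * t))
      = c * ∏ j : Fin n, (v j ^ (α j) * Real.exp (-((2 * t)⁻¹) * (v j) ^ 2)) := by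
  have h1 : eval v (monomial α c) = c * ∏ j : Fin n, v j ^ (α j) := by
    rw [eval_monomial]
    congr 1
    exact Finsupp.prod_fintype _ _ fun j => pow_zero (v j)
  have h2 : -(∑ j : Fin n, v j ^ 2) / (2 * t) = ∑ j : Fin n, (-((2 * t)⁻¹) * (v j) ^ 2) := by
    rw [neg_div, Finset.sum_div, ← Finset.sum_neg_distrib]
    exact Finset.sum_congr rfl fun j _ => by rw [div_eq_inv_mul]; ring
  rw [h1, h2, Real.exp_sum, mul_assoc, ← Finset.prod_mul_distrib]

lemma integrable_monomial (ht : 0 < t) (α : Fin n →₀ ℕ) (c : ℝ) :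
    Integrable (fun v : Fin n → ℝ =>
      eval v (monomial α c) * Real.exp (-(∑ j, v j ^ 2) / (2 * t))) := by
  simp only [integrand_monomial_eq t α c]
  exact (Integrable.fintype_prod (f := fun j (x : ℝ) =>
    x ^ (α j) * Real.exp (-((2 * t)⁻¹) * x ^ 2)) fun j => integrable_M ht (α j)).const_mul c

lemma I_monomial (ht : 0 < t) (α : Fin n →₀ ℕ) (c : ℝ) :
    ∫ v : Fin n → ℝ, eval v (monomial α c) * Real.exp (-(∑ j, v j ^ 2) / (2 * t))
      = c * ∏ j : Fin n, M t (α j) := by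
  simp only [integrand_monomial_eq t α c]
  rw [MeasureTheory.integral_const_mul]
  congr 1
  exact MeasureTheory.integral_fintype_prod_eq_prod
      (f := fun j (x : ℝ) => x ^ (α j) * Real.exp (-((2 * t)⁻¹) * x ^ 2))

lemma I_poly (ht : 0 < t) (p : MvPolynomial (Fin n) ℝ) :
    ∫ v : Fin n → ℝ, eval v p * Real.exp (-(∑ j, v j ^ 2) / (2 * t))
      = (Real.sqrt (2 * π * t)) ^ n * Sf t 0 p := by
  classical
  have h1 : ∀ v : Fin n → ℝ, eval v p * Real.exp (-(∑ j, v j ^ 2) / (2 * t))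
      = ∑ α ∈ p.support, eval v (monomial α (coeff α p))
          * Real.exp (-(∑ j, v j ^ 2) / (2 * t)) := by
    intro v
    conv_lhs => rw [p.as_sum]
    rw [map_sum, Finset.sum_mul]
  simp only [h1]
  rw [MeasureTheory.integral_finset_sum _ fun α _ => integrable_monomial ht α _]
  conv_rhs => rw [p.as_sum]
  rw [Sf_sum, Finset.mul_sum]
  refine Finset.sum_congr rfl fun α _ => ?_
  rw [I_monomial ht]
  have hm : (monomial α (coeff α p) : MvPolynomial (Fin n) ℝ)
      = C (coeff α p) * monomial α 1 := by rw [C_mul_monomial, mul_one]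
  rw [hm, Sf_C_mul, core ht (α.sum fun _ e => e) α le_rfl]
  ring

/-- Translation of a polynomial. -/
noncomputable def shiftP (z : Fin n → ℝ) (p : MvPolynomial (Fin n) ℝ) :
    MvPolynomial (Fin n) ℝ :=
  MvPolynomial.aeval (fun j => X j + C (z j)) p

lemma shiftP_C (z : Fin n → ℝ) (c : ℝ) : shiftP z (C c) = C c := by
  simp [shiftP, algebraMap_eq]

lemma shiftP_add (z : Fin n → ℝ) (p q : MvPolynomial (Fin n) ℝ) :
    shiftP z (p + q) = shiftP z p + shiftP z q := map_add _ _ _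

lemma shiftP_mul (z : Fin n → ℝ) (p q : MvPolynomial (Fin n) ℝ) :
    shiftP z (p * q) = shiftP z p * shiftP z q := map_mul _ _ _

lemma shiftP_zero (z : Fin n → ℝ) : shiftP z (0 : MvPolynomial (Fin n) ℝ) = 0 := map_zero _

lemma eval_shiftP (x z : Fin n → ℝ) (p : MvPolynomial (Fin n) ℝ) :
    eval x (shiftP z p) = eval (fun j => x j + z j) p := by
  induction p using MvPolynomial.induction_on with
  | C c => simp [shiftP_C]
  | add p q hp hq => rw [shiftP_add, map_add, hp, hq, map_add]
  | mul_X p j hp =>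
    have hXj : shiftP z (X j) = X j + C (z j) := by simp [shiftP, aeval_X]
    rw [shiftP_mul, map_mul, hp, hXj, map_mul, eval_X, map_add, eval_X, eval_C]

lemma pderiv_shiftP (i : Fin n) (z : Fin n → ℝ) (p : MvPolynomial (Fin n) ℝ) :
    pderiv i (shiftP z p) = shiftP z (pderiv i p) := by
  induction p using MvPolynomial.induction_on with
  | C c => rw [shiftP_C, pderiv_C, shiftP_zero]
  | add p q hp hq => rw [shiftP_add, map_add, hp, hq, map_add, shiftP_add]
  | mul_X p j hp =>
    have key : pderiv i (shiftP z (X j)) = shiftP z (pderiv i (X j)) := by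
      have hXj : shiftP z (X j) = X j + C (z j) := by simp [shiftP, aeval_X]
      rcases eq_or_ne i j with rfl | hij
      · rw [hXj, map_add, pderiv_X_self, pderiv_C, add_zero]
        simp [shiftP]
      · rw [hXj, map_add, pderiv_X_of_ne (Ne.symm hij), pderiv_C, add_zero, shiftP_zero]
    rw [shiftP_mul, pderiv_mul, hp, key, ← shiftP_mul, ← shiftP_mul, ← shiftP_add,
      ← pderiv_mul]

lemma lap_shiftP (z : Fin n → ℝ) (p : MvPolynomial (Fin n) ℝ) :
    mvLaplacian (shiftP z p) = shiftP z (mvLaplacian p) := by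
  simp only [mvLaplacian, pderiv_shiftP]
  exact (map_sum (MvPolynomial.aeval fun j => X j + C (z j)) _ _).symm

lemma lap_iter_shiftP (i : ℕ) (z : Fin n → ℝ) (p : MvPolynomial (Fin n) ℝ) :
    mvLaplacian^[i] (shiftP z p) = shiftP z (mvLaplacian^[i] p) := by
  induction i generalizing p with
  | zero => rfl
  | succ i ih => rw [Function.iterate_succ_apply, lap_shiftP, ih,
      Function.iterate_succ_apply]

lemma eval_zero_shiftP (z : Fin n → ℝ) (p : MvPolynomial (Fin n) ℝ) :
    eval (0 : Fin n → ℝ) (shiftP z p) = eval z p := by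
  rw [eval_shiftP]
  have h : (fun j => (0 : Fin n → ℝ) j + z j) = z := by funext j; simp
  rw [h]

lemma euclid_norm_sq (x : EuclideanSpace ℝ (Fin n)) : ‖x‖ ^ 2 = ∑ j, x j ^ 2 := by
  rw [EuclideanSpace.norm_eq, Real.sq_sqrt (by positivity)]
  exact Finset.sum_congr rfl fun j _ => by rw [Real.norm_eq_abs, sq_abs]

end GaussAux

/-- For `f(x) = -‖x‖²/2` and polynomial `g`, the Gaussian integral
`∫ g(x) exp((-‖x‖²/2 + ⟨x,y⟩)/ℏ) dx` equals
`(2πℏ)^{n/2} exp(‖y‖²/(2ℏ)) ∑_i (ℏ/2)^i (Δ^i g)(y)/i!`,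
the sum having finitely many nonzero terms. -/
theorem gaussian_integral_polynomial_expansion (n : ℕ) (hn : 1 ≤ n)
    (g : MvPolynomial (Fin n) ℝ) :
    (∃ N : ℕ, ∀ i ≥ N, mvLaplacian^[i] g = 0) ∧
    ∀ ℏ : ℝ, 0 < ℏ → ∀ y : EuclideanSpace ℝ (Fin n),
      ∫ x : EuclideanSpace ℝ (Fin n),
          (MvPolynomial.eval (fun j => x j) g) *
            Real.exp ((-‖x‖ ^ 2 / 2 + inner ℝ x y) / ℏ)
        = (2 * π * ℏ) ^ ((n : ℝ) / 2) * Real.exp (‖y‖ ^ 2 / (2 * ℏ)) *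
            ∑' i : ℕ, (ℏ / 2) ^ i *
              (MvPolynomial.eval (fun j => y j) (mvLaplacian^[i] g)) / (i.factorial) := by
  open GaussAux MvPolynomial in
  constructor
  · exact ⟨g.totalDegree + 1, fun i hi => GaussAux.lap_iter_eq_zero (by omega)⟩
  intro ℏ hℏ y
  set y' : Fin n → ℝ := fun j => y j with hy'
  -- Step 1 : complete the square
  have step1 : ∀ x : EuclideanSpace ℝ (Fin n),
      (MvPolynomial.eval (fun j => x j) g) * Real.exp ((-‖x‖ ^ 2 / 2 + inner ℝ x y) / ℏ)
        = Real.exp (‖y‖ ^ 2 / (2 * ℏ)) *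
            ((MvPolynomial.eval (fun j => x j) g) * Real.exp (-‖x - y‖ ^ 2 / (2 * ℏ))) := by
    intro x
    have hsq : (-‖x‖ ^ 2 / 2 + inner ℝ x y) / ℏ
        = ‖y‖ ^ 2 / (2 * ℏ) + (-‖x - y‖ ^ 2 / (2 * ℏ)) := by
      rw [norm_sub_sq_real]
      field_simp
      ring
    rw [hsq, Real.exp_add]
    ring
  simp only [step1]
  rw [MeasureTheory.integral_const_mul]
  -- Step 2 : translate by y
  have step2 : ∫ x : EuclideanSpace ℝ (Fin n),
      (MvPolynomial.eval (fun j => x j) g) * Real.exp (-‖x - y‖ ^ 2 / (2 * ℏ))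
      = ∫ x : EuclideanSpace ℝ (Fin n),
        (MvPolynomial.eval (fun j => x j + y' j) g) * Real.exp (-‖x‖ ^ 2 / (2 * ℏ)) := by
    rw [← MeasureTheory.integral_add_right_eq_self
      (fun x : EuclideanSpace ℝ (Fin n) =>
        (MvPolynomial.eval (fun j => x j) g) * Real.exp (-‖x - y‖ ^ 2 / (2 * ℏ))) y]
    refine MeasureTheory.integral_congr_ae (Filter.Eventually.of_forall fun x => ?_)
    have h1 : x + y - y = x := add_sub_cancel_right x y
    have h2 : ∀ j, (x + y) j = x j + y' j := fun j => rfl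
    simp only [h1, h2]
  rw [step2]
  -- Step 3 : rewrite with shifted polynomial
  have step3 : ∫ x : EuclideanSpace ℝ (Fin n),
      (MvPolynomial.eval (fun j => x j + y' j) g) * Real.exp (-‖x‖ ^ 2 / (2 * ℏ))
      = ∫ x : EuclideanSpace ℝ (Fin n),
        (MvPolynomial.eval (fun j => x j) (GaussAux.shiftP y' g))
          * Real.exp (-(∑ j, x j ^ 2) / (2 * ℏ)) := by
    refine MeasureTheory.integral_congr_ae (Filter.Eventually.of_forall fun x => ?_)
    simp only [GaussAux.eval_shiftP, GaussAux.euclid_norm_sq]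
  rw [step3]
  -- Step 4 : transfer to the product space
  have step4 : ∫ x : EuclideanSpace ℝ (Fin n),
      (MvPolynomial.eval (fun j => x j) (GaussAux.shiftP y' g))
        * Real.exp (-(∑ j, x j ^ 2) / (2 * ℏ))
      = ∫ v : Fin n → ℝ,
        (MvPolynomial.eval v (GaussAux.shiftP y' g)) * Real.exp (-(∑ j, v j ^ 2) / (2 * ℏ)) := by
    exact (EuclideanSpace.volume_preserving_symm_measurableEquiv_toLp (ι := Fin n)).integral_comp
      (MeasurableEquiv.measurableEmbedding _)
      (fun v : Fin n → ℝ =>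
        (MvPolynomial.eval v (GaussAux.shiftP y' g)) * Real.exp (-(∑ j, v j ^ 2) / (2 * ℏ)))
  rw [step4, GaussAux.I_poly hℏ]
  -- Step 5 : identify the sum
  have step5 : GaussAux.Sf ℏ 0 (GaussAux.shiftP y' g)
      = ∑' i : ℕ, (ℏ / 2) ^ i *
          (MvPolynomial.eval (fun j => y j) (mvLaplacian^[i] g)) / (i.factorial) := by
    refine tsum_congr fun i => ?_
    rw [GaussAux.lap_iter_shiftP, GaussAux.eval_zero_shiftP]
  rw [step5]
  -- Step 6 : the constant
  have step6 : (Real.sqrt (2 * π * ℏ)) ^ n = (2 * π * ℏ) ^ ((n : ℝ) / 2) := by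
    rw [Real.sqrt_eq_rpow, ← Real.rpow_natCast ((2 * π * ℏ) ^ ((1:ℝ)/2)) n,
      ← Real.rpow_mul (by positivity)]
    congr 1
    ring
  rw [step6]
  ring
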